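/- Let G be the line graph of an essentially 6-edge-connected (3,5)-regular bipartite graph with b vertices of degree 3 and c vertices of degree 5 and n = 3b = 5c edges. Then every cut of G has at most (28/15)n edges; in particular, since 2(n-1) > (28/15)n for n ≥ 16, G has no spanning bipartite subgraph that decomposes into two edge-disjoint spanning trees. -/

import Mathlib

/-- `d_G(X)`: the number of edges of `G` leaving `X`. -/
noncomputable def cutCard {V : Type*} (G : SimpleGraph V) (X : Set V) : ℕ :=
  {p : V × V | G.Adj p.1 p.2 ∧ p.1 ∈ X ∧ p.2 ∉ X}.ncard

open Finset in
lemma cut_aux {V₀ : Type*} [Fintype V₀] (G₀ : SimpleGraph V₀)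
    (P : V₀ → Bool)
    (hdeg : ∀ v, (P v = false → (G₀.neighborSet v).ncard = 3) ∧
                 (P v = true → (G₀.neighborSet v).ncard = 5))
    (b c n : ℕ)
    (hb : b = {v | (G₀.neighborSet v).ncard = 3}.ncard)
    (hc : c = {v | (G₀.neighborSet v).ncard = 5}.ncard)
    (hn3b : n = 3 * b) (hn5c : n = 5 * c)
    (X : Set G₀.edgeSet) :
    15 * cutCard G₀.lineGraph X ≤ 28 * n := by
  classical
  haveI : Fintype G₀.edgeSet := Fintype.ofFinite _
  set A : V₀ → Finset G₀.edgeSet :=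
    fun v => univ.filter (fun e => v ∈ (e : Sym2 V₀) ∧ e ∈ X) with hA
  set B : V₀ → Finset G₀.edgeSet :=
    fun v => univ.filter (fun e => v ∈ (e : Sym2 V₀) ∧ e ∉ X) with hB
  set S : Finset (G₀.edgeSet × G₀.edgeSet) :=
    univ.filter (fun p => G₀.lineGraph.Adj p.1 p.2 ∧ p.1 ∈ X ∧ p.2 ∉ X) with hS
  have h1 : cutCard G₀.lineGraph X = S.card := by
    rw [cutCard, ← Set.ncard_coe_finset]
    congr 1
    ext p
    simp [hS]
  have h2 : S = univ.biUnion (fun v => A v ×ˢ B v) := by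
    ext p
    simp only [hS, hA, hB, Finset.mem_biUnion, Finset.mem_product, Finset.mem_filter,
      Finset.mem_univ, true_and]
    constructor
    · rintro ⟨hadj, hx, hnx⟩
      obtain ⟨hne, v, hv1, hv2⟩ := SimpleGraph.lineGraph_adj_iff_exists.mp hadj
      exact ⟨v, ⟨hv1, hx⟩, ⟨hv2, hnx⟩⟩
    · rintro ⟨v, ⟨hv1, hx⟩, ⟨hv2, hnx⟩⟩
      refine ⟨SimpleGraph.lineGraph_adj_iff_exists.mpr ⟨?_, v, hv1, hv2⟩, hx, hnx⟩
      intro hpe; rw [hpe] at hx; exact hnx hx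
  have hdisj : ∀ u ∈ (univ : Finset V₀), ∀ v ∈ (univ : Finset V₀), u ≠ v →
      Disjoint (A u ×ˢ B u) (A v ×ˢ B v) := by
    intro u _ v _ huv
    rw [Finset.disjoint_left]
    rintro ⟨e, f⟩ h1' h2'
    simp only [hA, hB, Finset.mem_product, Finset.mem_filter, Finset.mem_univ, true_and]
      at h1' h2'
    obtain ⟨⟨hue, hex⟩, ⟨huf, hfx⟩⟩ := h1'
    obtain ⟨⟨hve, -⟩, ⟨hvf, -⟩⟩ := h2'
    have hef : (e : Sym2 V₀) = (f : Sym2 V₀) := Sym2.eq_of_ne_mem huv hue hve huf hvf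
    exact hfx (Subtype.ext hef ▸ hex)
  have h3 : S.card = ∑ v, (A v).card * (B v).card := by
    rw [h2, Finset.card_biUnion hdisj]
    simp [Finset.card_product]
  have hdegsum : ∀ v, (A v).card + (B v).card = (G₀.neighborSet v).ncard := by
    intro v
    have hdAB : Disjoint (A v) (B v) := by
      rw [Finset.disjoint_left]
      intro e he1 he2
      simp only [hA, hB, Finset.mem_filter, Finset.mem_univ, true_and] at he1 he2
      exact he2.2 he1.2
    rw [← Finset.card_union_of_disjoint hdAB]
    have hU : A v ∪ B v = univ.filter (fun e : G₀.edgeSet => v ∈ (e : Sym2 V₀)) := by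
      ext e
      by_cases he : e ∈ X <;> simp [hA, hB, he]
    rw [hU]
    have hinj := Finset.card_image_of_injective
      (univ.filter (fun e : G₀.edgeSet => v ∈ (e : Sym2 V₀))) (Subtype.val_injective)
    have himg : (univ.filter (fun e : G₀.edgeSet => v ∈ (e : Sym2 V₀))).image Subtype.val
        = G₀.incidenceFinset v := by
      ext s
      simp only [Finset.mem_image, Finset.mem_filter, Finset.mem_univ, true_and,
        SimpleGraph.mem_incidenceFinset]
      constructor
      · rintro ⟨e, hve, rfl⟩
        exact ⟨e.2, hve⟩
      · rintro ⟨hs, hvs⟩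
        exact ⟨⟨s, hs⟩, hvs, rfl⟩
    rw [← hinj, himg, SimpleGraph.card_incidenceFinset_eq_degree]
    rw [Set.ncard_eq_toFinset_card']
    rfl
  have hPbound : ∀ v, (A v).card * (B v).card ≤ if P v = false then 2 else 6 := by
    intro v
    have hs := hdegsum v
    by_cases h : P v = false
    · rw [if_pos h]
      have hab : (A v).card + (B v).card = 3 := by rw [hs, (hdeg v).1 h]
      revert hab
      generalize (A v).card = a
      generalize (B v).card = b2
      intro hab
      have ha : a ≤ 3 := by omega
      interval_cases a <;> omega
    · rw [if_neg h]
      have ht : P v = true := by revert h; cases P v <;> simp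
      have hab : (A v).card + (B v).card = 5 := by rw [hs, (hdeg v).2 ht]
      revert hab
      generalize (A v).card = a
      generalize (B v).card = b2
      intro hab
      have ha : a ≤ 5 := by omega
      interval_cases a <;> omega
  have hsum : S.card ≤ 2 * b + 6 * c := by
    have hbf : b = (univ.filter (fun v => P v = false)).card := by
      have hset : {v | (G₀.neighborSet v).ncard = 3} = {v | P v = false} := by
        ext v
        simp only [Set.mem_setOf_eq]
        constructor
        · intro h3
          by_contra hf
          have ht : P v = true := by revert hf; cases P v <;> simp
          have h5 := (hdeg v).2 ht
          omega
        · exact (hdeg v).1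
      rw [hb, hset, Set.ncard_eq_toFinset_card', Set.toFinset_setOf]
    have hcf : c = (univ.filter (fun v => ¬ P v = false)).card := by
      have hset : {v | (G₀.neighborSet v).ncard = 5} = {v | ¬ P v = false} := by
        ext v
        simp only [Set.mem_setOf_eq]
        constructor
        · intro h5 hf
          have h3 := (hdeg v).1 hf
          omega
        · intro hf
          have ht : P v = true := by revert hf; cases P v <;> simp
          exact (hdeg v).2 ht
      rw [hc, hset, Set.ncard_eq_toFinset_card', Set.toFinset_setOf]
    calc S.card = ∑ v, (A v).card * (B v).card := h3
      _ ≤ ∑ v, (if P v = false then 2 else 6) :=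
          Finset.sum_le_sum (fun v _ => hPbound v)
      _ = 2 * b + 6 * c := by
          rw [Finset.sum_ite, Finset.sum_const, Finset.sum_const, hbf, hcf]
          simp [mul_comm]
  omega

/-- Let `G` be the line graph of an essentially 6-edge-connected `(3,5)`-regular
bipartite graph `G₀` with `b` vertices of degree 3, `c` vertices of degree 5 and
`n = 3b = 5c` edges (`n ≥ 16`). Then every cut of `G` has at most `(28/15)·n`
edges; in particular `G` has no spanning bipartite subgraph decomposing into two
edge-disjoint spanning trees. -/
theorem stmt8 {V₀ : Type*} [Fintype V₀] (G₀ : SimpleGraph V₀)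
    (P : V₀ → Bool) (hbip : ∀ u v, G₀.Adj u v → P u ≠ P v)
    (hdeg : ∀ v, (P v = false → (G₀.neighborSet v).ncard = 3) ∧
                 (P v = true → (G₀.neighborSet v).ncard = 5))
    (b c n : ℕ)
    (hb : b = {v | (G₀.neighborSet v).ncard = 3}.ncard)
    (hc : c = {v | (G₀.neighborSet v).ncard = 5}.ncard)
    (hn : n = G₀.edgeSet.ncard)
    (hn3b : n = 3 * b) (hn5c : n = 5 * c) (hn16 : 16 ≤ n)
    (hess : ∀ X : Set V₀, (∃ u v, G₀.Adj u v ∧ u ∈ X ∧ v ∈ X) →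
      (∃ u v, G₀.Adj u v ∧ u ∉ X ∧ v ∉ X) → 6 ≤ cutCard G₀ X) :
    (∀ X : Set G₀.edgeSet, X.Nonempty → X ≠ Set.univ →
        15 * cutCard G₀.lineGraph X ≤ 28 * n) ∧
    ¬ ∃ H : SimpleGraph G₀.edgeSet, H ≤ G₀.lineGraph ∧
        (∃ Q : G₀.edgeSet → Bool, ∀ u v, H.Adj u v → Q u ≠ Q v) ∧
        ∃ T₁ T₂ : SimpleGraph G₀.edgeSet, T₁.IsTree ∧ T₂.IsTree ∧
          Disjoint T₁.edgeSet T₂.edgeSet ∧ T₁.edgeSet ∪ T₂.edgeSet = H.edgeSet := by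
  have key := cut_aux G₀ P hdeg b c n hb hc hn3b hn5c
  refine ⟨fun X _ _ => key X, ?_⟩
  rintro ⟨H, hle, ⟨Q, hQ⟩, T₁, T₂, hT₁, hT₂, hdisj, hunion⟩
  classical
  haveI : Fintype G₀.edgeSet := Fintype.ofFinite _
  haveI : Fintype T₁.edgeSet := Fintype.ofFinite _
  haveI : Fintype T₂.edgeSet := Fintype.ofFinite _
  have hcardV : Fintype.card G₀.edgeSet = n := by
    rw [← Nat.card_eq_fintype_card, Nat.card_coe_set_eq, hn]
  have ht1 : T₁.edgeSet.ncard = n - 1 := by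
    rw [Set.ncard_eq_toFinset_card']
    have h := hT₁.card_edgeFinset
    rw [hcardV] at h
    have h' : T₁.edgeSet.toFinset.card + 1 = n := h
    omega
  have ht2 : T₂.edgeSet.ncard = n - 1 := by
    rw [Set.ncard_eq_toFinset_card']
    have h := hT₂.card_edgeFinset
    rw [hcardV] at h
    have h' : T₂.edgeSet.toFinset.card + 1 = n := h
    omega
  have hH : H.edgeSet.ncard = (n - 1) + (n - 1) := by
    rw [← hunion, Set.ncard_union_eq hdisj (Set.toFinite _) (Set.toFinite _), ht1, ht2]
  set X : Set G₀.edgeSet := {e | Q e = true} with hX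
  have hsub : H.edgeSet ⊆ (fun p : (G₀.edgeSet × G₀.edgeSet) => Sym2.mk p.1 p.2) ''
      {p : G₀.edgeSet × G₀.edgeSet | G₀.lineGraph.Adj p.1 p.2 ∧ p.1 ∈ X ∧ p.2 ∉ X} := by
    rintro e he
    obtain ⟨⟨u, v⟩, rfl⟩ := e.exists_rep
    have hadj : H.Adj u v := H.mem_edgeSet.mp he
    have hne := hQ u v hadj
    have hL : G₀.lineGraph.Adj u v := hle hadj
    cases hu : Q u with
    | false =>
      have hv : Q v = true := by revert hne; rw [hu]; cases Q v <;> simp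
      refine ⟨(v, u), ⟨hL.symm, hv, by simp [hX, hu]⟩, ?_⟩
      exact Sym2.eq_swap
    | true =>
      have hv : Q v = false := by revert hne; rw [hu]; cases Q v <;> simp
      exact ⟨(u, v), ⟨hL, hu, by simp [hX, hv]⟩, rfl⟩
  have hineq1 : H.edgeSet.ncard ≤ cutCard G₀.lineGraph X := by
    calc H.edgeSet.ncard
        ≤ ((fun p : (G₀.edgeSet × G₀.edgeSet) => Sym2.mk p.1 p.2) ''
            {p : G₀.edgeSet × G₀.edgeSet |
              G₀.lineGraph.Adj p.1 p.2 ∧ p.1 ∈ X ∧ p.2 ∉ X}).ncard :=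
          Set.ncard_le_ncard hsub (Set.toFinite _)
      _ ≤ cutCard G₀.lineGraph X := Set.ncard_image_le (Set.toFinite _)
  have h28 := key X
  omega
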